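/- There exist a finite simple graph G and real thresholds τ < σ < ρ such that, denoting by D(t) the dominating set output by the two-step algorithm on G with measure SV and threshold t, one has |D(τ)| < |D(σ)| and |D(ρ)| < |D(σ)|. That is, the size of the dominating set produced by the two-step algorithm with the Shapley value is not a function of the threshold with a unique local minimum. -/

import Mathlib

/-- The degree of a vertex in a finite simple graph. -/
noncomputable def deg {V : Type*} [Fintype V] (G : SimpleGraph V) (v : V) : ℕ := by
  classical exact G.degree v

/-- The Shapley value of a vertex: the sum of reciprocals of its neighbors' degrees. -/
noncomputable def SV {V : Type*} [Fintype V] (G : SimpleGraph V) (v : V) : ℝ := by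
  classical exact ∑ u ∈ G.neighborFinset v, (1 : ℝ) / (G.degree u)

/-- The relative neighbor-degree of a vertex: deg(v)^2 divided by the sum of neighbors' degrees. -/
noncomputable def RND {V : Type*} [Fintype V] (G : SimpleGraph V) (v : V) : ℝ := by
  classical exact (G.degree v : ℝ) ^ 2 / ∑ u ∈ G.neighborFinset v, (G.degree u : ℝ)

/-- The dominating set output by the two-step algorithm with measure c and threshold t. -/
noncomputable def twoStep {V : Type*} [Fintype V] (G : SimpleGraph V) (c : V → ℝ) (t : ℝ) :
    Set V :=
  {v : V | c v > t} ∪ {v : V | (insert v (G.neighborSet v)) ∩ {u : V | c u > t} = ∅}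

def adjB : Fin 13 → Fin 13 → Bool := fun a b =>
  let L : List (ℕ × ℕ) := [(0,1),(0,2),(0,3),(0,4),(0,5),(0,6),(0,7),
    (1,2),(1,3),(1,4),(1,5),(1,6),(1,7),(1,8),(9,10),(9,11),(9,12)]
  decide ((a.val, b.val) ∈ L ∨ (b.val, a.val) ∈ L)

def G0 : SimpleGraph (Fin 13) where
  Adj a b := adjB a b = true
  symm := ⟨by intro a b; revert a b; decide⟩
  loopless := ⟨by intro a; revert a; decide⟩

instance : DecidableRel G0.Adj := fun a b => inferInstanceAs (Decidable (_ = true))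

lemma SV_eq (v : Fin 13) :
    SV G0 v = ∑ u ∈ G0.neighborFinset v, (1 : ℝ) / (G0.degree u) := by
  unfold SV
  congr!

lemma d0 : G0.degree 0 = 7 := by decide
lemma d1 : G0.degree 1 = 8 := by decide
lemma d2 : G0.degree 2 = 2 := by decide
lemma d3 : G0.degree 3 = 2 := by decide
lemma d4 : G0.degree 4 = 2 := by decide
lemma d5 : G0.degree 5 = 2 := by decide
lemma d6 : G0.degree 6 = 2 := by decide
lemma d7 : G0.degree 7 = 2 := by decide
lemma d8 : G0.degree 8 = 1 := by decide
lemma d9 : G0.degree 9 = 3 := by decide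
lemma d10 : G0.degree 10 = 1 := by decide
lemma d11 : G0.degree 11 = 1 := by decide
lemma d12 : G0.degree 12 = 1 := by decide

lemma e0 : SV G0 0 = 25/8 := by
  rw [SV_eq, show G0.neighborFinset 0 = {1,2,3,4,5,6,7} from by
    ext u; rw [SimpleGraph.mem_neighborFinset]; revert u; decide,
    Finset.sum_insert (by decide), Finset.sum_insert (by decide), Finset.sum_insert (by decide), Finset.sum_insert (by decide), Finset.sum_insert (by decide), Finset.sum_insert (by decide), Finset.sum_singleton, d1,d2,d3,d4,d5,d6,d7]
  norm_num

lemma e1 : SV G0 1 = 29/7 := by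
  rw [SV_eq, show G0.neighborFinset 1 = {0,2,3,4,5,6,7,8} from by
    ext u; rw [SimpleGraph.mem_neighborFinset]; revert u; decide,
    Finset.sum_insert (by decide), Finset.sum_insert (by decide), Finset.sum_insert (by decide), Finset.sum_insert (by decide), Finset.sum_insert (by decide), Finset.sum_insert (by decide), Finset.sum_insert (by decide), Finset.sum_singleton, d0,d2,d3,d4,d5,d6,d7,d8]
  norm_num

lemma e2 : SV G0 2 = 15/56 := by
  rw [SV_eq, show G0.neighborFinset 2 = {0,1} from by
    ext u; rw [SimpleGraph.mem_neighborFinset]; revert u; decide,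
    Finset.sum_insert (by decide), Finset.sum_singleton, d0,d1]
  norm_num

lemma e3 : SV G0 3 = 15/56 := by
  rw [SV_eq, show G0.neighborFinset 3 = {0,1} from by
    ext u; rw [SimpleGraph.mem_neighborFinset]; revert u; decide,
    Finset.sum_insert (by decide), Finset.sum_singleton, d0,d1]
  norm_num

lemma e4 : SV G0 4 = 15/56 := by
  rw [SV_eq, show G0.neighborFinset 4 = {0,1} from by
    ext u; rw [SimpleGraph.mem_neighborFinset]; revert u; decide,
    Finset.sum_insert (by decide), Finset.sum_singleton, d0,d1]
  norm_num

lemma e5 : SV G0 5 = 15/56 := by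
  rw [SV_eq, show G0.neighborFinset 5 = {0,1} from by
    ext u; rw [SimpleGraph.mem_neighborFinset]; revert u; decide,
    Finset.sum_insert (by decide), Finset.sum_singleton, d0,d1]
  norm_num

lemma e6 : SV G0 6 = 15/56 := by
  rw [SV_eq, show G0.neighborFinset 6 = {0,1} from by
    ext u; rw [SimpleGraph.mem_neighborFinset]; revert u; decide,
    Finset.sum_insert (by decide), Finset.sum_singleton, d0,d1]
  norm_num

lemma e7 : SV G0 7 = 15/56 := by
  rw [SV_eq, show G0.neighborFinset 7 = {0,1} from by
    ext u; rw [SimpleGraph.mem_neighborFinset]; revert u; decide,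
    Finset.sum_insert (by decide), Finset.sum_singleton, d0,d1]
  norm_num

lemma e8 : SV G0 8 = 1/8 := by
  rw [SV_eq, show G0.neighborFinset 8 = {1} from by
    ext u; rw [SimpleGraph.mem_neighborFinset]; revert u; decide,
    Finset.sum_singleton, d1]
  norm_num

lemma e9 : SV G0 9 = 3 := by
  rw [SV_eq, show G0.neighborFinset 9 = {10,11,12} from by
    ext u; rw [SimpleGraph.mem_neighborFinset]; revert u; decide,
    Finset.sum_insert (by decide), Finset.sum_insert (by decide), Finset.sum_singleton, d10,d11,d12]
  norm_num

lemma e10 : SV G0 10 = 1/3 := by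
  rw [SV_eq, show G0.neighborFinset 10 = {9} from by
    ext u; rw [SimpleGraph.mem_neighborFinset]; revert u; decide,
    Finset.sum_singleton, d9]
  norm_num

lemma e11 : SV G0 11 = 1/3 := by
  rw [SV_eq, show G0.neighborFinset 11 = {9} from by
    ext u; rw [SimpleGraph.mem_neighborFinset]; revert u; decide,
    Finset.sum_singleton, d9]
  norm_num

lemma e12 : SV G0 12 = 1/3 := by
  rw [SV_eq, show G0.neighborFinset 12 = {9} from by
    ext u; rw [SimpleGraph.mem_neighborFinset]; revert u; decide,
    Finset.sum_singleton, d9]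
  norm_num

lemma hset_tau : {u : Fin 13 | SV G0 u > (1 : ℝ)} = (↑({0,1,9} : Finset (Fin 13)) : Set (Fin 13)) := by
  ext u
  simp only [Set.mem_setOf_eq, Finset.mem_coe]
  fin_cases u
  · exact iff_of_true (by show SV G0 0 > ((1 : ℝ)); rw [e0]; norm_num) (by decide)
  · exact iff_of_true (by show SV G0 1 > ((1 : ℝ)); rw [e1]; norm_num) (by decide)
  · exact iff_of_false (by show ¬ SV G0 2 > ((1 : ℝ)); rw [e2]; norm_num) (by decide)
  · exact iff_of_false (by show ¬ SV G0 3 > ((1 : ℝ)); rw [e3]; norm_num) (by decide)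
  · exact iff_of_false (by show ¬ SV G0 4 > ((1 : ℝ)); rw [e4]; norm_num) (by decide)
  · exact iff_of_false (by show ¬ SV G0 5 > ((1 : ℝ)); rw [e5]; norm_num) (by decide)
  · exact iff_of_false (by show ¬ SV G0 6 > ((1 : ℝ)); rw [e6]; norm_num) (by decide)
  · exact iff_of_false (by show ¬ SV G0 7 > ((1 : ℝ)); rw [e7]; norm_num) (by decide)
  · exact iff_of_false (by show ¬ SV G0 8 > ((1 : ℝ)); rw [e8]; norm_num) (by decide)
  · exact iff_of_true (by show SV G0 9 > ((1 : ℝ)); rw [e9]; norm_num) (by decide)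
  · exact iff_of_false (by show ¬ SV G0 10 > ((1 : ℝ)); rw [e10]; norm_num) (by decide)
  · exact iff_of_false (by show ¬ SV G0 11 > ((1 : ℝ)); rw [e11]; norm_num) (by decide)
  · exact iff_of_false (by show ¬ SV G0 12 > ((1 : ℝ)); rw [e12]; norm_num) (by decide)

lemma hD_tau : twoStep G0 (SV G0) (1 : ℝ) = (↑({0,1,9} : Finset (Fin 13)) : Set (Fin 13)) := by
  unfold twoStep
  rw [hset_tau]
  ext v
  simp only [Set.mem_union, Set.mem_setOf_eq, Set.eq_empty_iff_forall_notMem,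
    Set.mem_inter_iff, Set.mem_insert_iff, SimpleGraph.mem_neighborSet, Finset.mem_coe,
    not_and, not_or]
  revert v
  decide

lemma hset_sig : {u : Fin 13 | SV G0 u > (153/50 : ℝ)} = (↑({0,1} : Finset (Fin 13)) : Set (Fin 13)) := by
  ext u
  simp only [Set.mem_setOf_eq, Finset.mem_coe]
  fin_cases u
  · exact iff_of_true (by show SV G0 0 > ((153/50 : ℝ)); rw [e0]; norm_num) (by decide)
  · exact iff_of_true (by show SV G0 1 > ((153/50 : ℝ)); rw [e1]; norm_num) (by decide)
  · exact iff_of_false (by show ¬ SV G0 2 > ((153/50 : ℝ)); rw [e2]; norm_num) (by decide)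
  · exact iff_of_false (by show ¬ SV G0 3 > ((153/50 : ℝ)); rw [e3]; norm_num) (by decide)
  · exact iff_of_false (by show ¬ SV G0 4 > ((153/50 : ℝ)); rw [e4]; norm_num) (by decide)
  · exact iff_of_false (by show ¬ SV G0 5 > ((153/50 : ℝ)); rw [e5]; norm_num) (by decide)
  · exact iff_of_false (by show ¬ SV G0 6 > ((153/50 : ℝ)); rw [e6]; norm_num) (by decide)
  · exact iff_of_false (by show ¬ SV G0 7 > ((153/50 : ℝ)); rw [e7]; norm_num) (by decide)
  · exact iff_of_false (by show ¬ SV G0 8 > ((153/50 : ℝ)); rw [e8]; norm_num) (by decide)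
  · exact iff_of_false (by show ¬ SV G0 9 > ((153/50 : ℝ)); rw [e9]; norm_num) (by decide)
  · exact iff_of_false (by show ¬ SV G0 10 > ((153/50 : ℝ)); rw [e10]; norm_num) (by decide)
  · exact iff_of_false (by show ¬ SV G0 11 > ((153/50 : ℝ)); rw [e11]; norm_num) (by decide)
  · exact iff_of_false (by show ¬ SV G0 12 > ((153/50 : ℝ)); rw [e12]; norm_num) (by decide)

lemma hD_sig : twoStep G0 (SV G0) (153/50 : ℝ) = (↑({0,1,9,10,11,12} : Finset (Fin 13)) : Set (Fin 13)) := by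
  unfold twoStep
  rw [hset_sig]
  ext v
  simp only [Set.mem_union, Set.mem_setOf_eq, Set.eq_empty_iff_forall_notMem,
    Set.mem_inter_iff, Set.mem_insert_iff, SimpleGraph.mem_neighborSet, Finset.mem_coe,
    not_and, not_or]
  revert v
  decide

lemma hset_rho : {u : Fin 13 | SV G0 u > (7/2 : ℝ)} = (↑({1} : Finset (Fin 13)) : Set (Fin 13)) := by
  ext u
  simp only [Set.mem_setOf_eq, Finset.mem_coe]
  fin_cases u
  · exact iff_of_false (by show ¬ SV G0 0 > ((7/2 : ℝ)); rw [e0]; norm_num) (by decide)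
  · exact iff_of_true (by show SV G0 1 > ((7/2 : ℝ)); rw [e1]; norm_num) (by decide)
  · exact iff_of_false (by show ¬ SV G0 2 > ((7/2 : ℝ)); rw [e2]; norm_num) (by decide)
  · exact iff_of_false (by show ¬ SV G0 3 > ((7/2 : ℝ)); rw [e3]; norm_num) (by decide)
  · exact iff_of_false (by show ¬ SV G0 4 > ((7/2 : ℝ)); rw [e4]; norm_num) (by decide)
  · exact iff_of_false (by show ¬ SV G0 5 > ((7/2 : ℝ)); rw [e5]; norm_num) (by decide)
  · exact iff_of_false (by show ¬ SV G0 6 > ((7/2 : ℝ)); rw [e6]; norm_num) (by decide)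
  · exact iff_of_false (by show ¬ SV G0 7 > ((7/2 : ℝ)); rw [e7]; norm_num) (by decide)
  · exact iff_of_false (by show ¬ SV G0 8 > ((7/2 : ℝ)); rw [e8]; norm_num) (by decide)
  · exact iff_of_false (by show ¬ SV G0 9 > ((7/2 : ℝ)); rw [e9]; norm_num) (by decide)
  · exact iff_of_false (by show ¬ SV G0 10 > ((7/2 : ℝ)); rw [e10]; norm_num) (by decide)
  · exact iff_of_false (by show ¬ SV G0 11 > ((7/2 : ℝ)); rw [e11]; norm_num) (by decide)
  · exact iff_of_false (by show ¬ SV G0 12 > ((7/2 : ℝ)); rw [e12]; norm_num) (by decide)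

lemma hD_rho : twoStep G0 (SV G0) (7/2 : ℝ) = (↑({1,9,10,11,12} : Finset (Fin 13)) : Set (Fin 13)) := by
  unfold twoStep
  rw [hset_rho]
  ext v
  simp only [Set.mem_union, Set.mem_setOf_eq, Set.eq_empty_iff_forall_notMem,
    Set.mem_inter_iff, Set.mem_insert_iff, SimpleGraph.mem_neighborSet, Finset.mem_coe,
    not_and, not_or]
  revert v
  decide

/-- The size of the dominating set produced by the two-step algorithm with the Shapley value
does not have a unique local minimum as a function of the threshold: there are thresholds
τ < σ < ρ with |D(τ)| < |D(σ)| and |D(ρ)| < |D(σ)|. -/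
theorem two_step_sv_not_unique_local_min :
    ∃ (n : ℕ) (G : SimpleGraph (Fin n)) (τ σ ρ : ℝ),
      τ < σ ∧ σ < ρ ∧
      (twoStep G (SV G) τ).ncard < (twoStep G (SV G) σ).ncard ∧
      (twoStep G (SV G) ρ).ncard < (twoStep G (SV G) σ).ncard := by
  refine ⟨13, G0, 1, 153/50, 7/2, by norm_num, by norm_num, ?_, ?_⟩
  · rw [hD_tau, hD_sig, Set.ncard_coe_finset, Set.ncard_coe_finset]
    decide
  · rw [hD_rho, hD_sig, Set.ncard_coe_finset, Set.ncard_coe_finset]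
    decide
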